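/- Let G ∈ 𝒢_{0,m2} (no loops) with m2 ≤ M_2²/M². For a simple ordered 2-path (v1,v2,v3) of G, let b_d(G,(v1,v2,v3)) denote the number of simple ordered 2-paths (u,v,w) of G with {u,v,w} ∩ {v1,v2,v3} = ∅ such that v1u, v2v and v3w are non-edges. Then for every simple ordered 2-path (v1,v2,v3) of G, M_2·(1 − (4·m2·(2Δ−3) + 3Δ³)/M_2) ≤ b_d(G,(v1,v2,v3)) ≤ M_2, i.e. M_2 − 4·m2·(2Δ−3) − 3Δ³ ≤ b_d(G,(v1,v2,v3)) ≤ M_2. -/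

import Mathlib

open Finset

lemma nat_aux1 {a b : ℕ} (h : a ≤ b) : a * a - a ≤ b * (b - 1) := by
  rcases Nat.eq_zero_or_pos a with ha | ha
  · simp [ha]
  · have h1 : a ≤ a * a := by nlinarith
    have hb : 1 ≤ b := by omega
    zify [h1, hb]
    nlinarith

lemma nat_aux2 {a b D : ℕ} (hD : a + 2*b ≤ D) (h2 : 2 ≤ D) :
    (a + 2*b) * (a + 2*b - 1) ≤ (a*a - a) + 2*b*(2*D - 3) := by
  rcases Nat.eq_zero_or_pos b with hb | hb
  · subst hb
    simp only [Nat.mul_zero, Nat.add_zero, Nat.zero_mul, Nat.zero_add]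
    rcases Nat.eq_zero_or_pos a with ha | ha
    · simp [ha]
    · have h1 : a ≤ a * a := by nlinarith
      zify [h1, ha]
      nlinarith
  · have h1 : a ≤ a * a := by nlinarith
    have h3 : 3 ≤ 2 * D := by omega
    have h4 : 1 ≤ a + 2 * b := by omega
    zify [h1, h3, h4]
    nlinarith

section Aux

variable {n : ℕ} {d : Fin n → ℕ} {mG : Fin n → Fin n → ℕ} {Δ : ℕ}

lemma ssum (hdeg' : ∀ v, ∑ u ∈ univ.filter (fun u => u ≠ v), mG v u = d v)
    (v x : Fin n) (hx : x ≠ v) :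
    (∑ u ∈ univ.filter (fun u => u ≠ v ∧ u ≠ x), mG v u) + mG v x = d v := by
  rw [← hdeg' v]
  have hsplit := Finset.sum_filter_add_sum_filter_not (univ.filter (fun u => u ≠ v))
      (fun u => u ≠ x) (fun u => mG v u)
  rw [Finset.filter_filter, Finset.filter_filter] at hsplit
  have h2 : (univ.filter (fun u => u ≠ v ∧ ¬u ≠ x)) = {x} := by
    ext u
    simp only [Finset.mem_filter, Finset.mem_univ, true_and, Finset.mem_singleton,
      not_not]
    constructor
    · rintro ⟨_, h⟩; exact h
    · rintro rfl; exact ⟨hx, rfl⟩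
  rw [h2, Finset.sum_singleton] at hsplit
  exact hsplit

lemma countW (hdeg' : ∀ v, ∑ u ∈ univ.filter (fun u => u ≠ v), mG v u = d v)
    (v x : Fin n) (hx : x ≠ v) :
    (univ.filter (fun w => w ≠ v ∧ w ≠ x ∧ mG v w = 1)).card + mG v x ≤ d v := by
  have h1 : (univ.filter (fun w => w ≠ v ∧ w ≠ x ∧ mG v w = 1)).card
      ≤ ∑ u ∈ univ.filter (fun u => u ≠ v ∧ u ≠ x), mG v u := by
    calc (univ.filter (fun w => w ≠ v ∧ w ≠ x ∧ mG v w = 1)).card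
        = ∑ u ∈ univ.filter (fun w => w ≠ v ∧ w ≠ x ∧ mG v w = 1), mG v u := by
          rw [Finset.card_eq_sum_ones]
          refine Finset.sum_congr rfl ?_
          intro u hu
          simp only [Finset.mem_filter] at hu
          omega
      _ ≤ _ := by
          refine Finset.sum_le_sum_of_subset ?_
          intro u hu
          simp only [Finset.mem_filter] at hu ⊢
          tauto
  have := ssum hdeg' v x hx
  omega

lemma countN (hdeg' : ∀ v, ∑ u ∈ univ.filter (fun u => u ≠ v), mG v u = d v)
    (v : Fin n) :
    (univ.filter (fun w => w ≠ v ∧ mG v w = 1)).card ≤ d v := by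
  rw [← hdeg' v]
  calc (univ.filter (fun w => w ≠ v ∧ mG v w = 1)).card
      = ∑ u ∈ univ.filter (fun w => w ≠ v ∧ mG v w = 1), mG v u := by
        rw [Finset.card_eq_sum_ones]
        refine Finset.sum_congr rfl ?_
        intro u hu
        simp only [Finset.mem_filter] at hu
        omega
    _ ≤ _ := by
        refine Finset.sum_le_sum_of_subset ?_
        intro u hu
        simp only [Finset.mem_filter] at hu ⊢
        tauto

lemma pairFrom (hsymm : ∀ u v, mG u v = mG v u)
    (hdeg' : ∀ v, ∑ u ∈ univ.filter (fun u => u ≠ v), mG v u = d v)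
    (hΔd : ∀ v, d v ≤ Δ) (x : Fin n) :
    (univ.filter (fun p : Fin n × Fin n =>
      p.1 ≠ p.2 ∧ p.1 ≠ x ∧ p.2 ≠ x ∧ mG x p.1 = 1 ∧ mG p.1 p.2 = 1)).card
      ≤ Δ * (Δ - 1) := by
  rw [mul_comm]
  have h := Finset.card_le_mul_card_image_of_maps_to
    (f := Prod.fst)
    (s := univ.filter (fun p : Fin n × Fin n =>
      p.1 ≠ p.2 ∧ p.1 ≠ x ∧ p.2 ≠ x ∧ mG x p.1 = 1 ∧ mG p.1 p.2 = 1))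
    (t := univ.filter (fun u => u ≠ x ∧ mG x u = 1))
    (by
      intro p hp
      simp only [Finset.mem_filter, Finset.mem_univ, true_and] at hp ⊢
      tauto)
    (Δ - 1)
    (by
      intro v hv
      simp only [Finset.mem_filter, Finset.mem_univ, true_and] at hv
      have hinj := Finset.card_le_card_of_injOn (f := Prod.snd)
        (s := (univ.filter (fun p : Fin n × Fin n =>
          p.1 ≠ p.2 ∧ p.1 ≠ x ∧ p.2 ≠ x ∧ mG x p.1 = 1 ∧ mG p.1 p.2 = 1)).filter
          (fun p => p.1 = v))
        (t := univ.filter (fun w => w ≠ v ∧ w ≠ x ∧ mG v w = 1))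
        (by
          intro p hp
          simp only [Finset.mem_coe, Finset.mem_filter, Finset.mem_univ, true_and] at hp ⊢
          obtain ⟨⟨h1, h2, h3, h4, h5⟩, h6⟩ := hp
          subst h6
          exact ⟨fun h => h1 h.symm, h3, h5⟩)
        (by
          intro p hp q hq hpq
          simp only [Finset.coe_filter, Finset.mem_univ, true_and,
            Set.mem_setOf_eq] at hp hq
          exact Prod.ext (hp.2.trans hq.2.symm) hpq)
      have hcw := countW hdeg' v x (fun h => hv.1 h.symm)
      have hmx : mG v x = 1 := by rw [← hsymm x v]; exact hv.2
      have hdv := hΔd v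
      omega)
  refine h.trans ?_
  have := countN hdeg' x
  have := hΔd x
  exact Nat.mul_le_mul_left _ (by omega)

lemma pairCenter
    (hdeg' : ∀ v, ∑ u ∈ univ.filter (fun u => u ≠ v), mG v u = d v)
    (hΔd : ∀ v, d v ≤ Δ) (v : Fin n) :
    (univ.filter (fun p : Fin n × Fin n =>
      p.1 ≠ p.2 ∧ p.1 ≠ v ∧ p.2 ≠ v ∧ mG v p.1 = 1 ∧ mG v p.2 = 1)).card
      ≤ Δ * (Δ - 1) := by
  rw [mul_comm]
  have h := Finset.card_le_mul_card_image_of_maps_to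
    (f := Prod.fst)
    (s := univ.filter (fun p : Fin n × Fin n =>
      p.1 ≠ p.2 ∧ p.1 ≠ v ∧ p.2 ≠ v ∧ mG v p.1 = 1 ∧ mG v p.2 = 1))
    (t := univ.filter (fun u => u ≠ v ∧ mG v u = 1))
    (by
      intro p hp
      simp only [Finset.mem_filter, Finset.mem_univ, true_and] at hp ⊢
      tauto)
    (Δ - 1)
    (by
      intro u hu
      simp only [Finset.mem_filter, Finset.mem_univ, true_and] at hu
      have hinj := Finset.card_le_card_of_injOn (f := Prod.snd)
        (s := (univ.filter (fun p : Fin n × Fin n =>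
          p.1 ≠ p.2 ∧ p.1 ≠ v ∧ p.2 ≠ v ∧ mG v p.1 = 1 ∧ mG v p.2 = 1)).filter
          (fun p => p.1 = u))
        (t := univ.filter (fun w => w ≠ v ∧ w ≠ u ∧ mG v w = 1))
        (by
          intro p hp
          simp only [Finset.mem_coe, Finset.mem_filter, Finset.mem_univ, true_and] at hp ⊢
          obtain ⟨⟨h1, h2, h3, h4, h5⟩, h6⟩ := hp
          subst h6
          exact ⟨h3, fun h => h1 h.symm, h5⟩)
        (by
          intro p hp q hq hpq
          simp only [Finset.coe_filter, Finset.mem_univ, true_and,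
            Set.mem_setOf_eq] at hp hq
          exact Prod.ext (hp.2.trans hq.2.symm) hpq)
      have hcw := countW hdeg' v u hu.1
      have hdv := hΔd v
      omega)
  refine h.trans ?_
  have := countN hdeg' v
  have := hΔd v
  exact Nat.mul_le_mul_left _ (by omega)

lemma pathsFrom (hsymm : ∀ u v, mG u v = mG v u)
    (hdeg' : ∀ v, ∑ u ∈ univ.filter (fun u => u ≠ v), mG v u = d v)
    (hΔd : ∀ v, d v ≤ Δ) (x : Fin n) :
    (univ.filter (fun t : Fin n × Fin n × Fin n =>
      (t.1 ≠ t.2.1 ∧ t.1 ≠ t.2.2 ∧ t.2.1 ≠ t.2.2 ∧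
        mG t.1 t.2.1 = 1 ∧ mG t.2.1 t.2.2 = 1) ∧ t.1 = x)).card ≤ Δ * (Δ - 1) := by
  refine le_trans (Finset.card_le_card_of_injOn (f := fun t => (t.2.1, t.2.2))
    (t := univ.filter (fun p : Fin n × Fin n =>
      p.1 ≠ p.2 ∧ p.1 ≠ x ∧ p.2 ≠ x ∧ mG x p.1 = 1 ∧ mG p.1 p.2 = 1)) ?_ ?_)
    (pairFrom hsymm hdeg' hΔd x)
  · intro t ht
    simp only [Finset.mem_coe, Finset.mem_filter, Finset.mem_univ, true_and] at ht ⊢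
    obtain ⟨⟨h1, h2, h3, h4, h5⟩, h6⟩ := ht
    subst h6
    exact ⟨h3, fun h => h1 h.symm, fun h => h2 h.symm, h4, h5⟩
  · intro p hp q hq hpq
    simp only [Finset.coe_filter, Finset.mem_univ, true_and, Set.mem_setOf_eq] at hp hq
    simp only [Prod.mk.injEq] at hpq
    exact Prod.ext (hp.2.trans hq.2.symm) (Prod.ext hpq.1 hpq.2)

lemma pathsTo (hsymm : ∀ u v, mG u v = mG v u)
    (hdeg' : ∀ v, ∑ u ∈ univ.filter (fun u => u ≠ v), mG v u = d v)
    (hΔd : ∀ v, d v ≤ Δ) (x : Fin n) :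
    (univ.filter (fun t : Fin n × Fin n × Fin n =>
      (t.1 ≠ t.2.1 ∧ t.1 ≠ t.2.2 ∧ t.2.1 ≠ t.2.2 ∧
        mG t.1 t.2.1 = 1 ∧ mG t.2.1 t.2.2 = 1) ∧ t.2.2 = x)).card ≤ Δ * (Δ - 1) := by
  refine le_trans (Finset.card_le_card_of_injOn (f := fun t => (t.2.1, t.1))
    (t := univ.filter (fun p : Fin n × Fin n =>
      p.1 ≠ p.2 ∧ p.1 ≠ x ∧ p.2 ≠ x ∧ mG x p.1 = 1 ∧ mG p.1 p.2 = 1)) ?_ ?_)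
    (pairFrom hsymm hdeg' hΔd x)
  · intro t ht
    simp only [Finset.mem_coe, Finset.mem_filter, Finset.mem_univ, true_and] at ht ⊢
    obtain ⟨⟨h1, h2, h3, h4, h5⟩, h6⟩ := ht
    subst h6
    refine ⟨fun h => h1 h.symm, h3, h2, ?_, ?_⟩
    · rw [hsymm]; exact h5
    · rw [hsymm]; exact h4
  · intro p hp q hq hpq
    simp only [Finset.coe_filter, Finset.mem_univ, true_and, Set.mem_setOf_eq] at hp hq
    simp only [Prod.mk.injEq] at hpq
    exact Prod.ext hpq.2 (Prod.ext hpq.1 (hp.2.trans hq.2.symm))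

lemma pathsCenter (hsymm : ∀ u v, mG u v = mG v u)
    (hdeg' : ∀ v, ∑ u ∈ univ.filter (fun u => u ≠ v), mG v u = d v)
    (hΔd : ∀ v, d v ≤ Δ) (v : Fin n) :
    (univ.filter (fun t : Fin n × Fin n × Fin n =>
      (t.1 ≠ t.2.1 ∧ t.1 ≠ t.2.2 ∧ t.2.1 ≠ t.2.2 ∧
        mG t.1 t.2.1 = 1 ∧ mG t.2.1 t.2.2 = 1) ∧ t.2.1 = v)).card ≤ Δ * (Δ - 1) := by
  refine le_trans (Finset.card_le_card_of_injOn (f := fun t => (t.1, t.2.2))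
    (t := univ.filter (fun p : Fin n × Fin n =>
      p.1 ≠ p.2 ∧ p.1 ≠ v ∧ p.2 ≠ v ∧ mG v p.1 = 1 ∧ mG v p.2 = 1)) ?_ ?_)
    (pairCenter hdeg' hΔd v)
  · intro t ht
    simp only [Finset.mem_coe, Finset.mem_filter, Finset.mem_univ, true_and] at ht ⊢
    obtain ⟨⟨h1, h2, h3, h4, h5⟩, h6⟩ := ht
    subst h6
    refine ⟨h2, h1, fun h => h3 h.symm, ?_, h5⟩
    · rw [hsymm]; exact h4
  · intro p hp q hq hpq
    simp only [Finset.coe_filter, Finset.mem_univ, true_and, Set.mem_setOf_eq] at hp hq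
    simp only [Prod.mk.injEq] at hpq
    exact Prod.ext hpq.1 (Prod.ext (hp.2.trans hq.2.symm) hpq.2)

lemma centerFiberCard (hsymm : ∀ u v, mG u v = mG v u) (v : Fin n) :
    (univ.filter (fun t : Fin n × Fin n × Fin n =>
      (t.1 ≠ t.2.1 ∧ t.1 ≠ t.2.2 ∧ t.2.1 ≠ t.2.2 ∧
        mG t.1 t.2.1 = 1 ∧ mG t.2.1 t.2.2 = 1) ∧ t.2.1 = v)).card =
    (univ.filter (fun u => u ≠ v ∧ mG v u = 1)).card *
      (univ.filter (fun u => u ≠ v ∧ mG v u = 1)).card -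
      (univ.filter (fun u => u ≠ v ∧ mG v u = 1)).card := by
  rw [← Finset.offDiag_card]
  apply Finset.card_bij (i := fun t _ => ((t.1, t.2.2) : Fin n × Fin n))
  · intro t ht
    simp only [Finset.mem_filter, Finset.mem_univ, true_and] at ht
    obtain ⟨⟨h1, h2, h3, h4, h5⟩, h6⟩ := ht
    subst h6
    rw [Finset.mem_offDiag]
    refine ⟨?_, ?_, h2⟩
    · simp only [Finset.mem_filter, Finset.mem_univ, true_and]
      exact ⟨h1, by rw [hsymm]; exact h4⟩
    · simp only [Finset.mem_filter, Finset.mem_univ, true_and]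
      exact ⟨fun h => h3 h.symm, h5⟩
  · intro t ht u hu htu
    simp only [Finset.mem_filter, Finset.mem_univ, true_and] at ht hu
    simp only [Prod.mk.injEq] at htu
    exact Prod.ext htu.1 (Prod.ext (ht.2.trans hu.2.symm) htu.2)
  · intro p hp
    rw [Finset.mem_offDiag] at hp
    obtain ⟨hp1, hp2, hp3⟩ := hp
    simp only [Finset.mem_filter, Finset.mem_univ, true_and] at hp1 hp2
    refine ⟨(p.1, v, p.2), ?_, rfl⟩
    simp only [Finset.mem_filter, Finset.mem_univ, true_and]
    exact ⟨⟨fun h => hp1.1 h, hp3, fun h => hp2.1 h.symm,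
      by rw [hsymm]; exact hp1.2, hp2.2⟩, by trivial⟩

lemma countNZ2 (hdeg' : ∀ v, ∑ u ∈ univ.filter (fun u => u ≠ v), mG v u = d v)
    (v x : Fin n) (hx : x ≠ v) :
    (univ.filter (fun w => w ≠ v ∧ w ≠ x ∧ mG v w ≠ 0)).card + mG v x ≤ d v := by
  have h1 : (univ.filter (fun w => w ≠ v ∧ w ≠ x ∧ mG v w ≠ 0)).card
      ≤ ∑ u ∈ univ.filter (fun u => u ≠ v ∧ u ≠ x), mG v u := by
    calc (univ.filter (fun w => w ≠ v ∧ w ≠ x ∧ mG v w ≠ 0)).card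
        = ∑ _u ∈ univ.filter (fun w => w ≠ v ∧ w ≠ x ∧ mG v w ≠ 0), 1 := by
          rw [Finset.card_eq_sum_ones]
      _ ≤ ∑ u ∈ univ.filter (fun w => w ≠ v ∧ w ≠ x ∧ mG v w ≠ 0), mG v u := by
          refine Finset.sum_le_sum ?_
          intro u hu
          simp only [Finset.mem_filter] at hu
          omega
      _ ≤ _ := by
          refine Finset.sum_le_sum_of_subset ?_
          intro u hu
          simp only [Finset.mem_filter] at hu ⊢
          tauto
  have := ssum hdeg' v x hx
  omega

lemma countNZ (hdeg' : ∀ v, ∑ u ∈ univ.filter (fun u => u ≠ v), mG v u = d v)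
    (v : Fin n) :
    (univ.filter (fun w => w ≠ v ∧ mG v w ≠ 0)).card ≤ d v := by
  rw [← hdeg' v]
  calc (univ.filter (fun w => w ≠ v ∧ mG v w ≠ 0)).card
      = ∑ _u ∈ univ.filter (fun w => w ≠ v ∧ mG v w ≠ 0), 1 := by
        rw [Finset.card_eq_sum_ones]
    _ ≤ ∑ u ∈ univ.filter (fun w => w ≠ v ∧ mG v w ≠ 0), mG v u := by
        refine Finset.sum_le_sum ?_
        intro u hu
        simp only [Finset.mem_filter] at hu
        omega
    _ ≤ _ := by
        refine Finset.sum_le_sum_of_subset ?_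
        intro u hu
        simp only [Finset.mem_filter] at hu ⊢
        tauto

end Aux

lemma nat_aux3 {D : ℕ} (h2 : 2 ≤ D) :
    2*((D*(D-1))*(D-1)) + 4*(D*(D-1)) + (D*(D-1))*(D+1) ≤ 3*D^3 := by
  have h1 : 1 ≤ D := by omega
  zify [h1]
  nlinarith

/-- **Bounds on `b_d(G, (v1,v2,v3))`.**
`G ∈ 𝒢_{0,m2}` (loopless) with `m2 ≤ M₂²/M²`.  For a simple ordered 2-path
`(v1,v2,v3)` of `G`, `b_d(G,(v1,v2,v3))` is the number of simple ordered
2-paths `(u,v,w)` of `G` with `{u,v,w} ∩ {v1,v2,v3} = ∅` such that `v1u`,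
`v2v`, `v3w` are non-edges.  Then
`M₂ − 4·m2·(2Δ−3) − 3Δ³ ≤ b_d(G,(v1,v2,v3)) ≤ M₂`. -/
theorem bd_path_bounds (n : ℕ) (d : Fin n → ℕ) (mG : Fin n → Fin n → ℕ)
    (M M2 Δ m2 : ℕ)
    (hM : M = ∑ i, d i)
    (hM2 : M2 = ∑ i, d i * (d i - 1))
    (hΔ : Δ = Finset.univ.sup d)
    (hsymm : ∀ u v, mG u v = mG v u)
    (hdeg : ∀ v, (∑ u ∈ Finset.univ.filter (fun u => u ≠ v), mG v u)
        + 2 * mG v v = d v)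
    (hloop : ∀ v, mG v v = 0)
    (hmul : ∀ u v, u ≠ v → mG u v ≤ 2)
    (hm2 : 2 * m2 = Set.ncard {q : Fin n × Fin n | q.1 ≠ q.2 ∧ mG q.1 q.2 = 2})
    (hm2le : (m2 : ℝ) ≤ (M2 : ℝ) ^ 2 / (M : ℝ) ^ 2)
    (v1 v2 v3 : Fin n)
    (hdist : v1 ≠ v2 ∧ v1 ≠ v3 ∧ v2 ≠ v3)
    (hpath : mG v1 v2 = 1 ∧ mG v2 v3 = 1)
    (bd1 : ℕ)
    (hbd1 : bd1 = Set.ncard {t : Fin n × Fin n × Fin n |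
      t.1 ≠ t.2.1 ∧ t.1 ≠ t.2.2 ∧ t.2.1 ≠ t.2.2 ∧
      mG t.1 t.2.1 = 1 ∧ mG t.2.1 t.2.2 = 1 ∧
      t.1 ≠ v1 ∧ t.1 ≠ v2 ∧ t.1 ≠ v3 ∧
      t.2.1 ≠ v1 ∧ t.2.1 ≠ v2 ∧ t.2.1 ≠ v3 ∧
      t.2.2 ≠ v1 ∧ t.2.2 ≠ v2 ∧ t.2.2 ≠ v3 ∧
      mG v1 t.1 = 0 ∧ mG v2 t.2.1 = 0 ∧ mG v3 t.2.2 = 0}) :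
    (M2 : ℝ) - 4 * m2 * (2 * Δ - 3) - 3 * Δ ^ 3 ≤ (bd1 : ℝ) ∧ bd1 ≤ M2 := by
  classical
  obtain ⟨hd12, hd13, hd23⟩ := hdist
  obtain ⟨hp12, hp23⟩ := hpath
  have hΔd : ∀ v, d v ≤ Δ := fun v => hΔ ▸ Finset.le_sup (Finset.mem_univ v)
  have hdeg' : ∀ v, ∑ u ∈ univ.filter (fun u => u ≠ v), mG v u = d v := by
    intro v
    have h := hdeg v
    rw [hloop v] at h
    simpa using h
  -- Δ ≥ 2
  have hΔ2 : 2 ≤ Δ := by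
    have hA := ssum hdeg' v2 v1 hd12
    have hv3mem : v3 ∈ univ.filter (fun u => u ≠ v2 ∧ u ≠ v1) := by
      simp only [Finset.mem_filter, Finset.mem_univ, true_and]
      exact ⟨hd23.symm, hd13.symm⟩
    have hB : mG v2 v3 ≤ ∑ u ∈ univ.filter (fun u => u ≠ v2 ∧ u ≠ v1), mG v2 u :=
      Finset.single_le_sum (fun _ _ => Nat.zero_le _) hv3mem
    have hm21 : mG v2 v1 = 1 := by rw [← hsymm]; exact hp12
    have := hΔd v2
    omega
  -- degree decomposition
  have hdecomp : ∀ v, d v = (univ.filter (fun u => u ≠ v ∧ mG v u = 1)).card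
      + 2 * (univ.filter (fun u => u ≠ v ∧ mG v u = 2)).card := by
    intro v
    rw [← hdeg' v]
    rw [show (univ.filter (fun u => u ≠ v ∧ mG v u = 1))
        = (univ.filter (fun u => u ≠ v)).filter (fun u => mG v u = 1) from
        (Finset.filter_filter _ _ _).symm]
    rw [show (univ.filter (fun u => u ≠ v ∧ mG v u = 2))
        = (univ.filter (fun u => u ≠ v)).filter (fun u => mG v u = 2) from
        (Finset.filter_filter _ _ _).symm]
    rw [Finset.card_filter, Finset.card_filter, Finset.mul_sum,
      ← Finset.sum_add_distrib]
    refine Finset.sum_congr rfl ?_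
    intro u hu
    simp only [Finset.mem_filter, Finset.mem_univ, true_and] at hu
    have hle := hmul v u hu.symm
    rcases (by omega : mG v u = 0 ∨ mG v u = 1 ∨ mG v u = 2) with h | h | h <;>
      simp [h]
  -- the set of simple ordered 2-paths
  set Paths : Finset (Fin n × Fin n × Fin n) := univ.filter (fun t =>
      t.1 ≠ t.2.1 ∧ t.1 ≠ t.2.2 ∧ t.2.1 ≠ t.2.2 ∧
      mG t.1 t.2.1 = 1 ∧ mG t.2.1 t.2.2 = 1) with hPaths
  -- path count fiberwise over the center
  have hPsum : Paths.card = ∑ v,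
      ((univ.filter (fun u => u ≠ v ∧ mG v u = 1)).card *
        (univ.filter (fun u => u ≠ v ∧ mG v u = 1)).card -
        (univ.filter (fun u => u ≠ v ∧ mG v u = 1)).card) := by
    rw [hPaths]
    rw [Finset.card_eq_sum_card_fiberwise (f := fun t => t.2.1) (t := univ)
      (fun x _ => Finset.mem_univ _)]
    refine Finset.sum_congr rfl ?_
    intro v _
    rw [Finset.filter_filter]
    exact centerFiberCard hsymm v
  -- double edge count
  have hDsum : ∑ v, (univ.filter (fun u => u ≠ v ∧ mG v u = 2)).card = 2 * m2 := by
    have hset : {q : Fin n × Fin n | q.1 ≠ q.2 ∧ mG q.1 q.2 = 2}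
        = ↑(univ.filter (fun q : Fin n × Fin n => q.1 ≠ q.2 ∧ mG q.1 q.2 = 2)) := by
      ext q
      simp
    rw [hset, Set.ncard_coe_finset] at hm2
    rw [hm2]
    rw [Finset.card_eq_sum_card_fiberwise (f := Prod.fst) (t := univ)
      (fun x _ => Finset.mem_univ _)]
    refine Finset.sum_congr rfl ?_
    intro v _
    rw [Finset.filter_filter]
    apply Finset.card_bij (i := fun u _ => ((v, u) : Fin n × Fin n))
    · intro u hu
      simp only [Finset.mem_filter, Finset.mem_univ, true_and] at hu ⊢
      exact ⟨⟨fun h => hu.1 h.symm, hu.2⟩, by trivial⟩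
    · intro u hu u' hu' huu'
      simpa using congrArg Prod.snd huu'
    · intro q hq
      simp only [Finset.mem_filter, Finset.mem_univ, true_and] at hq
      obtain ⟨⟨h1, h2⟩, h3⟩ := hq
      refine ⟨q.2, ?_, ?_⟩
      · simp only [Finset.mem_filter, Finset.mem_univ, true_and]
        rw [← h3]
        exact ⟨fun h => h1 h.symm, h2⟩
      · rw [← h3]
  -- lower bound for the number of paths
  have hM2le : M2 ≤ Paths.card + 4 * m2 * (2 * Δ - 3) := by
    rw [hM2, hPsum]
    have hstep : ∀ i : Fin n, d i * (d i - 1) ≤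
        ((univ.filter (fun u => u ≠ i ∧ mG i u = 1)).card *
          (univ.filter (fun u => u ≠ i ∧ mG i u = 1)).card -
          (univ.filter (fun u => u ≠ i ∧ mG i u = 1)).card) +
        2 * (univ.filter (fun u => u ≠ i ∧ mG i u = 2)).card * (2 * Δ - 3) := by
      intro i
      rw [hdecomp i]
      exact nat_aux2 (by rw [← hdecomp i]; exact hΔd i) hΔ2
    calc ∑ i, d i * (d i - 1) ≤ ∑ i,
        (((univ.filter (fun u => u ≠ i ∧ mG i u = 1)).card *
          (univ.filter (fun u => u ≠ i ∧ mG i u = 1)).card -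
          (univ.filter (fun u => u ≠ i ∧ mG i u = 1)).card) +
        2 * (univ.filter (fun u => u ≠ i ∧ mG i u = 2)).card * (2 * Δ - 3)) :=
          Finset.sum_le_sum (fun i _ => hstep i)
      _ = (∑ i, ((univ.filter (fun u => u ≠ i ∧ mG i u = 1)).card *
          (univ.filter (fun u => u ≠ i ∧ mG i u = 1)).card -
          (univ.filter (fun u => u ≠ i ∧ mG i u = 1)).card)) +
          (∑ i, 2 * (univ.filter (fun u => u ≠ i ∧ mG i u = 2)).card * (2 * Δ - 3)) := by
          rw [Finset.sum_add_distrib]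
      _ = _ := by
          congr 1
          have : ∀ i : Fin n, 2 * (univ.filter (fun u => u ≠ i ∧ mG i u = 2)).card * (2 * Δ - 3)
              = ((univ.filter (fun u => u ≠ i ∧ mG i u = 2)).card) * (2 * (2 * Δ - 3)) := by
            intro i; ring
          rw [Finset.sum_congr rfl (fun i _ => this i), ← Finset.sum_mul, hDsum]
          ring
  -- upper bound for the number of paths
  have hPleM2 : Paths.card ≤ M2 := by
    rw [hM2, hPsum]
    refine Finset.sum_le_sum ?_
    intro i _
    refine nat_aux1 ?_
    have := hdecomp i
    omega
  -- the good set
  set Ex : Fin n × Fin n × Fin n → Prop := fun t =>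
      t.1 ≠ v1 ∧ t.1 ≠ v2 ∧ t.1 ≠ v3 ∧
      t.2.1 ≠ v1 ∧ t.2.1 ≠ v2 ∧ t.2.1 ≠ v3 ∧
      t.2.2 ≠ v1 ∧ t.2.2 ≠ v2 ∧ t.2.2 ≠ v3 ∧
      mG v1 t.1 = 0 ∧ mG v2 t.2.1 = 0 ∧ mG v3 t.2.2 = 0 with hEx
  have hbd1' : bd1 = (Paths.filter Ex).card := by
    rw [hbd1]
    have hPE : Paths.filter Ex = univ.filter (fun t : Fin n × Fin n × Fin n =>
        t.1 ≠ t.2.1 ∧ t.1 ≠ t.2.2 ∧ t.2.1 ≠ t.2.2 ∧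
        mG t.1 t.2.1 = 1 ∧ mG t.2.1 t.2.2 = 1 ∧
        t.1 ≠ v1 ∧ t.1 ≠ v2 ∧ t.1 ≠ v3 ∧
        t.2.1 ≠ v1 ∧ t.2.1 ≠ v2 ∧ t.2.1 ≠ v3 ∧
        t.2.2 ≠ v1 ∧ t.2.2 ≠ v2 ∧ t.2.2 ≠ v3 ∧
        mG v1 t.1 = 0 ∧ mG v2 t.2.1 = 0 ∧ mG v3 t.2.2 = 0) := by
      rw [hPaths]
      ext t
      simp only [Finset.mem_filter, Finset.mem_univ, true_and, hEx, and_assoc]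
    have hset : {t : Fin n × Fin n × Fin n |
        t.1 ≠ t.2.1 ∧ t.1 ≠ t.2.2 ∧ t.2.1 ≠ t.2.2 ∧
        mG t.1 t.2.1 = 1 ∧ mG t.2.1 t.2.2 = 1 ∧
        t.1 ≠ v1 ∧ t.1 ≠ v2 ∧ t.1 ≠ v3 ∧
        t.2.1 ≠ v1 ∧ t.2.1 ≠ v2 ∧ t.2.1 ≠ v3 ∧
        t.2.2 ≠ v1 ∧ t.2.2 ≠ v2 ∧ t.2.2 ≠ v3 ∧
        mG v1 t.1 = 0 ∧ mG v2 t.2.1 = 0 ∧ mG v3 t.2.2 = 0}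
        = ↑(univ.filter (fun t : Fin n × Fin n × Fin n =>
        t.1 ≠ t.2.1 ∧ t.1 ≠ t.2.2 ∧ t.2.1 ≠ t.2.2 ∧
        mG t.1 t.2.1 = 1 ∧ mG t.2.1 t.2.2 = 1 ∧
        t.1 ≠ v1 ∧ t.1 ≠ v2 ∧ t.1 ≠ v3 ∧
        t.2.1 ≠ v1 ∧ t.2.1 ≠ v2 ∧ t.2.1 ≠ v3 ∧
        t.2.2 ≠ v1 ∧ t.2.2 ≠ v2 ∧ t.2.2 ≠ v3 ∧
        mG v1 t.1 = 0 ∧ mG v2 t.2.1 = 0 ∧ mG v3 t.2.2 = 0)) := by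
      ext t
      simp only [Finset.coe_filter, Finset.mem_univ, true_and, Set.mem_setOf_eq]
    rw [hset, Set.ncard_coe_finset, hPE]
  have hsplit : (Paths.filter Ex).card + (Paths.filter (fun t => ¬ Ex t)).card
      = Paths.card := Finset.card_filter_add_card_filter_not Ex
  -- the seven bad families
  set F1 := Paths.filter (fun t => t.1 ≠ v2 ∧ mG v1 t.1 ≠ 0) with hF1
  set F2 := Paths.filter (fun t => t.1 = v1) with hF2
  set F3 := Paths.filter (fun t => t.1 = v3) with hF3
  set F4 := Paths.filter (fun t => t.2.1 = v2 ∨ mG v2 t.2.1 ≠ 0) with hF4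
  set F5 := Paths.filter (fun t => t.2.2 ≠ v2 ∧ mG v3 t.2.2 ≠ 0) with hF5
  set F6 := Paths.filter (fun t => t.2.2 = v1) with hF6
  set F7 := Paths.filter (fun t => t.2.2 = v3) with hF7
  have hcover : Paths.filter (fun t => ¬ Ex t)
      ⊆ F1 ∪ F2 ∪ F3 ∪ F4 ∪ F5 ∪ F6 ∪ F7 := by
    intro t ht
    have htP : t ∈ Paths := (Finset.mem_filter.1 ht).1
    have htE : ¬ Ex t := (Finset.mem_filter.1 ht).2
    have htP' := htP
    rw [hPaths] at htP'
    obtain ⟨h1, h2, h3, h4, h5⟩ := (Finset.mem_filter.1 htP').2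
    simp only [Finset.mem_union]
    by_cases c4 : t.2.1 = v2 ∨ mG v2 t.2.1 ≠ 0
    · have hmem : t ∈ F4 := by rw [hF4]; exact Finset.mem_filter.2 ⟨htP, c4⟩
      exact Or.inl (Or.inl (Or.inl (Or.inr hmem)))
    have hc41 : t.2.1 ≠ v2 := fun h => c4 (Or.inl h)
    have hc42 : mG v2 t.2.1 = 0 := by
      by_contra hh
      exact c4 (Or.inr hh)
    have ht1v2 : t.1 ≠ v2 := by
      intro h
      rw [← h] at hc42
      omega
    have ht21v1 : t.2.1 ≠ v1 := by
      intro h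
      rw [h, hsymm v2 v1, hp12] at hc42
      omega
    have ht21v3 : t.2.1 ≠ v3 := by
      intro h
      rw [h, hp23] at hc42
      omega
    have ht22v2 : t.2.2 ≠ v2 := by
      intro h
      rw [h, hsymm t.2.1 v2] at h5
      omega
    by_cases e2 : t.1 = v1
    · have hmem : t ∈ F2 := by rw [hF2]; exact Finset.mem_filter.2 ⟨htP, e2⟩
      exact Or.inl (Or.inl (Or.inl (Or.inl (Or.inl (Or.inr hmem)))))
    by_cases e3 : t.1 = v3
    · have hmem : t ∈ F3 := by rw [hF3]; exact Finset.mem_filter.2 ⟨htP, e3⟩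
      exact Or.inl (Or.inl (Or.inl (Or.inl (Or.inr hmem))))
    by_cases e6 : t.2.2 = v1
    · have hmem : t ∈ F6 := by rw [hF6]; exact Finset.mem_filter.2 ⟨htP, e6⟩
      exact Or.inl (Or.inr hmem)
    by_cases e7 : t.2.2 = v3
    · have hmem : t ∈ F7 := by rw [hF7]; exact Finset.mem_filter.2 ⟨htP, e7⟩
      exact Or.inr hmem
    by_cases f1 : mG v1 t.1 = 0
    · by_cases f3 : mG v3 t.2.2 = 0
      · exact absurd (show Ex t from by
          rw [hEx]
          exact ⟨e2, ht1v2, e3, ht21v1, hc41, ht21v3, e6, ht22v2, e7, f1, hc42, f3⟩) htE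
      · have hmem : t ∈ F5 := by rw [hF5]; exact Finset.mem_filter.2 ⟨htP, ⟨ht22v2, f3⟩⟩
        exact Or.inl (Or.inl (Or.inr hmem))
    · have hmem : t ∈ F1 := by rw [hF1]; exact Finset.mem_filter.2 ⟨htP, ⟨ht1v2, f1⟩⟩
      exact Or.inl (Or.inl (Or.inl (Or.inl (Or.inl (Or.inl hmem)))))
  -- bounds for the seven families
  have hF2b : F2.card ≤ Δ * (Δ - 1) := by
    rw [hF2, hPaths, Finset.filter_filter]
    exact pathsFrom hsymm hdeg' hΔd v1
  have hF3b : F3.card ≤ Δ * (Δ - 1) := by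
    rw [hF3, hPaths, Finset.filter_filter]
    exact pathsFrom hsymm hdeg' hΔd v3
  have hF6b : F6.card ≤ Δ * (Δ - 1) := by
    rw [hF6, hPaths, Finset.filter_filter]
    exact pathsTo hsymm hdeg' hΔd v1
  have hF7b : F7.card ≤ Δ * (Δ - 1) := by
    rw [hF7, hPaths, Finset.filter_filter]
    exact pathsTo hsymm hdeg' hΔd v3
  have hF1b : F1.card ≤ (Δ * (Δ - 1)) * (Δ - 1) := by
    have hmaps : ∀ t ∈ F1, t.1 ∈ univ.filter
        (fun u => u ≠ v1 ∧ u ≠ v2 ∧ mG v1 u ≠ 0) := by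
      intro t ht
      rw [hF1] at ht
      obtain ⟨htP, h1, h2⟩ := Finset.mem_filter.1 ht
      simp only [Finset.mem_filter, Finset.mem_univ, true_and]
      refine ⟨?_, h1, h2⟩
      intro h
      rw [h, hloop v1] at h2
      exact h2 rfl
    have hfib : ∀ x ∈ univ.filter (fun u => u ≠ v1 ∧ u ≠ v2 ∧ mG v1 u ≠ 0),
        (F1.filter (fun t => t.1 = x)).card ≤ Δ * (Δ - 1) := by
      intro x _
      refine le_trans (Finset.card_le_card ?_) (pathsFrom hsymm hdeg' hΔd x)
      intro t ht
      rw [hF1, hPaths] at ht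
      simp only [Finset.mem_filter, Finset.mem_univ, true_and] at ht ⊢
      exact ⟨ht.1.1, ht.2⟩
    refine (Finset.card_le_mul_card_image_of_maps_to hmaps (Δ * (Δ - 1)) hfib).trans ?_
    have hU := countNZ2 hdeg' v1 v2 hd12.symm
    have hd1 := hΔd v1
    rw [hp12] at hU
    exact Nat.mul_le_mul_left _ (by omega)
  have hF5b : F5.card ≤ (Δ * (Δ - 1)) * (Δ - 1) := by
    have hmaps : ∀ t ∈ F5, t.2.2 ∈ univ.filter
        (fun u => u ≠ v3 ∧ u ≠ v2 ∧ mG v3 u ≠ 0) := by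
      intro t ht
      rw [hF5] at ht
      obtain ⟨htP, h1, h2⟩ := Finset.mem_filter.1 ht
      simp only [Finset.mem_filter, Finset.mem_univ, true_and]
      refine ⟨?_, h1, h2⟩
      intro h
      rw [h, hloop v3] at h2
      exact h2 rfl
    have hfib : ∀ x ∈ univ.filter (fun u => u ≠ v3 ∧ u ≠ v2 ∧ mG v3 u ≠ 0),
        (F5.filter (fun t => t.2.2 = x)).card ≤ Δ * (Δ - 1) := by
      intro x _
      refine le_trans (Finset.card_le_card ?_) (pathsTo hsymm hdeg' hΔd x)
      intro t ht
      rw [hF5, hPaths] at ht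
      simp only [Finset.mem_filter, Finset.mem_univ, true_and] at ht ⊢
      exact ⟨ht.1.1, ht.2⟩
    refine (Finset.card_le_mul_card_image_of_maps_to hmaps (Δ * (Δ - 1)) hfib).trans ?_
    have hU := countNZ2 hdeg' v3 v2 hd23
    have hd3 := hΔd v3
    have hm32 : mG v3 v2 = 1 := by rw [hsymm v3 v2]; exact hp23
    rw [hm32] at hU
    exact Nat.mul_le_mul_left _ (by omega)
  have hF4b : F4.card ≤ (Δ * (Δ - 1)) * (Δ + 1) := by
    have hmaps : ∀ t ∈ F4, t.2.1 ∈ univ.filter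
        (fun u => u = v2 ∨ mG v2 u ≠ 0) := by
      intro t ht
      rw [hF4] at ht
      obtain ⟨htP, h1⟩ := Finset.mem_filter.1 ht
      simp only [Finset.mem_filter, Finset.mem_univ, true_and]
      exact h1
    have hfib : ∀ x ∈ univ.filter (fun u => u = v2 ∨ mG v2 u ≠ 0),
        (F4.filter (fun t => t.2.1 = x)).card ≤ Δ * (Δ - 1) := by
      intro x _
      refine le_trans (Finset.card_le_card ?_) (pathsCenter hsymm hdeg' hΔd x)
      intro t ht
      rw [hF4, hPaths] at ht
      simp only [Finset.mem_filter, Finset.mem_univ, true_and] at ht ⊢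
      exact ⟨ht.1.1, ht.2⟩
    refine (Finset.card_le_mul_card_image_of_maps_to hmaps (Δ * (Δ - 1)) hfib).trans ?_
    have hsub : univ.filter (fun u => u = v2 ∨ mG v2 u ≠ 0)
        ⊆ insert v2 (univ.filter (fun u => u ≠ v2 ∧ mG v2 u ≠ 0)) := by
      intro u hu
      simp only [Finset.mem_filter, Finset.mem_univ, true_and] at hu
      by_cases h : u = v2
      · exact Finset.mem_insert.2 (Or.inl h)
      · refine Finset.mem_insert.2 (Or.inr ?_)
        simp only [Finset.mem_filter, Finset.mem_univ, true_and]
        rcases hu with h' | h'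
        · exact absurd h' h
        · exact ⟨h, h'⟩
    have hcard := Finset.card_le_card hsub
    have hins := Finset.card_insert_le v2 (univ.filter (fun u => u ≠ v2 ∧ mG v2 u ≠ 0))
    have hNZ := countNZ hdeg' v2
    have hd2 := hΔd v2
    exact Nat.mul_le_mul_left _ (by omega)
  -- total bad bound
  have hBad : (Paths.filter (fun t => ¬ Ex t)).card ≤ 3 * Δ ^ 3 := by
    have h1 := Finset.card_le_card hcover
    have hu2 := Finset.card_union_le (F1 ∪ F2 ∪ F3 ∪ F4 ∪ F5 ∪ F6) F7
    have hu3 := Finset.card_union_le (F1 ∪ F2 ∪ F3 ∪ F4 ∪ F5) F6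
    have hu4 := Finset.card_union_le (F1 ∪ F2 ∪ F3 ∪ F4) F5
    have hu5 := Finset.card_union_le (F1 ∪ F2 ∪ F3) F4
    have hu6 := Finset.card_union_le (F1 ∪ F2) F3
    have hu7 := Finset.card_union_le F1 F2
    have htot := nat_aux3 hΔ2
    linarith
  -- assemble
  have hfinalN : M2 ≤ bd1 + 4 * m2 * (2 * Δ - 3) + 3 * Δ ^ 3 := by
    have h0 : bd1 + (Paths.filter (fun t => ¬ Ex t)).card = Paths.card := by
      rw [hbd1']
      exact hsplit
    linarith [hM2le, hBad]
  constructor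
  · have h3 : 3 ≤ 2 * Δ := by omega
    have hcast := (Nat.cast_le (α := ℝ)).2 hfinalN
    have hc2 : ((2 * Δ - 3 : ℕ) : ℝ) = 2 * (Δ : ℝ) - 3 := by
      rw [Nat.cast_sub h3]
      push_cast
      ring
    push_cast at hcast
    rw [hc2] at hcast
    linarith
  · rw [hbd1']
    exact le_trans (Finset.card_le_card (Finset.filter_subset _ _)) hPleM2
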